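/- Let A be a prime unital C*-algebra and let a, b ∈ A be such that r(a·x) ≤ r(b·x) for all x ∈ A. If b is self-adjoint (b = b*), then a·b = b·a. -/

import Mathlib

open NormedSpace Bornology Set

section aux

variable {A : Type*} [NormedRing A] [CompleteSpace A] [NormedAlgebra ℂ A]

lemma specRad_mul_comm' (a b : A) :
    spectralRadius ℂ (a * b) = spectralRadius ℂ (b * a) := by
  have key : ∀ x y : A, spectralRadius ℂ (x * y) ≤ spectralRadius ℂ (y * x) := by
    intro x y
    rw [spectralRadius, spectralRadius]
    refine iSup₂_le fun k hk => ?_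
    rcases eq_or_ne k 0 with rfl | hne
    · simp
    · have hk' : k ∈ spectrum ℂ (y * x) := by
        have hmem : k ∈ spectrum ℂ (x * y) \ {0} := ⟨hk, hne⟩
        rw [spectrum.nonzero_mul_comm] at hmem
        exact hmem.1
      exact le_iSup₂_of_le k hk' le_rfl
  exact le_antisymm (key a b) (key b a)

end aux

/-- Theorem 3.8, Claim 1: In a prime unital C*-algebra, if `r(a x) ≤ r(b x)`
for all `x` and `b` is self-adjoint, then `a b = b a`. -/
theorem commute_of_spectralRadius_le_selfAdjoint
    {A : Type*} [NormedRing A] [StarRing A] [CStarRing A] [CompleteSpace A]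
    [NormedAlgebra ℂ A] [StarModule ℂ A]
    (hprime : ∀ a b : A, (∀ x : A, a * x * b = 0) → a = 0 ∨ b = 0)
    (a b : A)
    (h : ∀ x : A, spectralRadius ℂ (a * x) ≤ spectralRadius ℂ (b * x))
    (hb : b = star b) :
    a * b = b * a := by
  rcases subsingleton_or_nontrivial A with hS | hN
  · exact Subsingleton.elim _ _
  letI : CStarAlgebra A := {}
  letI : NormedAlgebra ℚ A := .restrictScalars ℚ ℂ A
  -- the one-parameter group `u t = exp (t • b)`
  set u : ℂ → A := fun t => exp (t • b) with hu
  have hu0 : u 0 = 1 := by simp [hu]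
  have humul : ∀ s t : ℂ, u s * u t = u (s + t) := by
    intro s t
    have hc : Commute (s • b) (t • b) := ((Commute.refl b).smul_left s).smul_right t
    simp only [hu]
    rw [← exp_add_of_commute hc, add_smul]
  have huinv : ∀ t : ℂ, u (-t) * u t = 1 := by
    intro t; rw [humul, neg_add_cancel, hu0]
  have huinv' : ∀ t : ℂ, u t * u (-t) = 1 := by
    intro t; rw [humul, add_neg_cancel, hu0]
  have hub : ∀ t : ℂ, b * u t = u t * b := by
    intro t
    exact (((Commute.refl b).smul_right t).exp_right).eq
  -- the entire function `F t = u (-t) * a * u t`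
  set F : ℂ → A := fun t => u (-t) * a * u t with hF
  -- key spectral radius bound
  have hkey : ∀ (t : ℂ) (x : A),
      spectralRadius ℂ (F t * x) ≤ spectralRadius ℂ (b * x) := by
    intro t x
    have h1 := h (u t * x * u (-t))
    have e1 : a * (u t * x * u (-t)) = (a * (u t * x)) * u (-t) :=
      (mul_assoc a (u t * x) (u (-t))).symm
    have e2 : spectralRadius ℂ (a * (u t * x * u (-t)))
        = spectralRadius ℂ (F t * x) := by
      rw [e1, specRad_mul_comm']
      congr 1
      show u (-t) * (a * (u t * x)) = (u (-t) * a * u t) * x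
      simp only [mul_assoc]
    have e3 : b * (u t * x * u (-t)) = (u t * (b * x)) * u (-t) := by
      rw [← mul_assoc, ← mul_assoc, hub t, mul_assoc (u t) b x]
    have e4 : spectralRadius ℂ (b * (u t * x * u (-t)))
        = spectralRadius ℂ (b * x) := by
      rw [e3, specRad_mul_comm', ← mul_assoc, huinv, one_mul]
    rw [e2, e4] at h1
    exact h1
  -- norm bound : ‖F t‖ ≤ ‖b‖
  have hbound : ∀ t : ℂ, ‖F t‖ ≤ ‖b‖ := by
    intro t
    have hsa : IsSelfAdjoint (F t * star (F t)) := IsSelfAdjoint.mul_star_self (F t)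
    have e1 : (‖F t‖₊ * ‖F t‖₊ : ENNReal) = spectralRadius ℂ (F t * star (F t)) := by
      rw [hsa.spectralRadius_eq_nnnorm, CStarRing.nnnorm_self_mul_star]
      push_cast; ring
    have e2 : spectralRadius ℂ (b * star (F t)) ≤ (‖b‖₊ * ‖F t‖₊ : ENNReal) := by
      refine (spectrum.spectralRadius_le_nnnorm (𝕜 := ℂ) _).trans ?_
      have : ‖b * star (F t)‖₊ ≤ ‖b‖₊ * ‖F t‖₊ := by
        calc ‖b * star (F t)‖₊ ≤ ‖b‖₊ * ‖star (F t)‖₊ := nnnorm_mul_le _ _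
          _ = ‖b‖₊ * ‖F t‖₊ := by rw [nnnorm_star]
      exact_mod_cast ENNReal.coe_le_coe.2 this
    have e3 : (‖F t‖₊ * ‖F t‖₊ : ENNReal) ≤ (‖b‖₊ * ‖F t‖₊ : ENNReal) :=
      e1.le.trans ((hkey t (star (F t))).trans e2)
    rcases eq_or_ne (‖F t‖₊ : ENNReal) 0 with h0 | h0
    · have : ‖F t‖ = 0 := by simpa using h0
      rw [this]; exact norm_nonneg b
    · have := ENNReal.mul_le_mul_iff_left h0 (by simp) |>.1 e3
      exact_mod_cast ENNReal.coe_le_coe.1 this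
  -- `F` is entire
  have hdexp : Differentiable ℂ (fun t : ℂ => exp (t • b)) :=
    fun t => (hasDerivAt_exp_smul_const b t).differentiableAt
  have hdiff : Differentiable ℂ F := by
    have h1 : Differentiable ℂ (fun t : ℂ => u (-t)) :=
      hdexp.comp differentiable_neg
    exact (h1.mul (differentiable_const a)).mul hdexp
  -- Liouville : `F` is constant
  have hconst : ∀ t : ℂ, F t = F 0 := by
    intro t
    refine hdiff.apply_eq_apply_of_bounded ?_ t 0
    refine (isBounded_iff_forall_norm_le).2 ⟨‖b‖, ?_⟩
    rintro _ ⟨t, rfl⟩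
    exact hbound t
  have hF0 : F 0 = a := by simp [hF, hu0]
  -- hence `a` commutes with `u t`
  have hcomm : ∀ t : ℂ, a * u t = u t * a := by
    intro t
    have h5 : u (-t) * a * u t = a := by
      have := hconst t
      rw [hF0] at this
      exact this
    calc a * u t = (u t * (u (-t) * a * u t)) := by
          rw [← mul_assoc, ← mul_assoc, huinv' t, one_mul]
      _ = u t * a := by rw [h5]
  -- differentiate at 0
  have hd : HasDerivAt (fun t : ℂ => exp (t • b)) (exp ((0:ℂ) • b) * b) 0 :=
    hasDerivAt_exp_smul_const b 0
  have hd1 : HasDerivAt (fun t : ℂ => a * u t) (a * (exp ((0:ℂ) • b) * b)) 0 :=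
    hd.const_mul a
  have hd2 : HasDerivAt (fun t : ℂ => a * u t) ((exp ((0:ℂ) • b) * b) * a) 0 := by
    have := hd.mul_const a
    simpa only [funext hcomm] using this
  have := hd1.unique hd2
  simpa using this
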